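/- Let S be an H-graded ring, τ a graded automorphism of S, and form the skew polynomial ring S[x; τ] with relation x·a = τ(a)·x for a ∈ S. Let c be a central element of H with a homogeneous regular normal ω ∈ S of degree c, suppose τ(ω) = ω, and let H₁ be the group obtained from H by adjoining x̄ central over H with x̄^{n+1} = c. Grade S[x;τ] by H₁ with deg(x) = x̄ and S in its original degrees. Then the element x^{n+1} + ω of S[x; τ] is homogeneous of degree c, and hence the quotient ring R₁ = S[x;τ]/(x^{n+1} + ω) inherits an H₁-grading. -/

import Mathlib

/-- let `S` be an `H`-graded ring, `τ` a graded automorphism of `S`,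
`ω ∈ S` a regular normal homogeneous element of degree `c` (central in `H`) with
`τ ω = ω`, and let `T = S[x; τ]` be the skew polynomial ring (`x·a = τ(a)·x`),
graded by the group `H₁ = (H × ℤ)/⟨(c, −(n+1))⟩` with `deg x = x̄` and `S` in its
original degrees.  Then `x^(n+1) + ω` is homogeneous of degree (the image of) `c`,
and hence the two-sided ideal it generates is homogeneous, so that
`R₁ = S[x;τ]/(x^(n+1) + ω)` inherits an `H₁`-grading. -/
theorem stmt_14 {H : Type} [Group H] (n : ℕ) (hn : 1 ≤ n)
    (c : H) (hc : c ∈ Subgroup.center H)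
    [(Subgroup.zpowers ((c, Multiplicative.ofAdd (-(n + 1 : ℤ))) : H × Multiplicative ℤ)).Normal]
    {S : Type} [Ring S] (𝒜 : H → AddSubgroup S)
    (hmul : ∀ {g h : H} {a b : S}, a ∈ 𝒜 g → b ∈ 𝒜 h → a * b ∈ 𝒜 (g * h))
    (ω : S) (hω : ω ∈ 𝒜 c)
    (hreg_left : ∀ a : S, a * ω = 0 → a = 0)
    (hreg_right : ∀ a : S, ω * a = 0 → a = 0)
    (hnormal_lr : ∀ a : S, ∃ b : S, a * ω = ω * b)
    (hnormal_rl : ∀ b : S, ∃ a : S, ω * b = a * ω)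
    (τ : S ≃+* S) (hτgr : ∀ (h : H) (a : S), a ∈ 𝒜 h → τ a ∈ 𝒜 h)
    (hτω : τ ω = ω)
    -- `T` is the skew polynomial ring `S[x; τ]`:
    {T : Type} [Ring T] (ι : S →+* T) (x : T)
    (hskew : ∀ a : S, x * ι a = ι (τ a) * x)
    (hfree : ∀ t : T, ∃! f : ℕ →₀ S, t = f.sum fun i s => ι s * x ^ i)
    -- the `H₁`-grading of `T`, where `H₁ = (H × ℤ)/⟨(c, −(n+1))⟩`:
    (𝒯 : ((H × Multiplicative ℤ) ⧸
        Subgroup.zpowers ((c, Multiplicative.ofAdd (-(n + 1 : ℤ))) : H × Multiplicative ℤ)) →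
      AddSubgroup T)
    [DirectSum.Decomposition 𝒯]
    (h𝒯 : ∀ g (u : T), u ∈ 𝒯 g ↔ ∃ f : ℕ →₀ S,
      u = (f.sum fun i s => ι s * x ^ i) ∧
      ∀ i ∈ f.support, ∃ h : H, f i ∈ 𝒜 h ∧
        (QuotientGroup.mk (h, Multiplicative.ofAdd (i : ℤ)) : (H × Multiplicative ℤ) ⧸
          Subgroup.zpowers ((c, Multiplicative.ofAdd (-(n + 1 : ℤ))) : H × Multiplicative ℤ)) = g) :
    (x ^ (n + 1) + ι ω) ∈
      𝒯 (QuotientGroup.mk (c, Multiplicative.ofAdd (0 : ℤ))) ∧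
    (AddSubgroup.closure {t : T | ∃ a b : T, t = a * (x ^ (n + 1) + ι ω) * b} =
      AddSubgroup.closure {t : T |
        t ∈ AddSubgroup.closure {t : T | ∃ a b : T, t = a * (x ^ (n + 1) + ι ω) * b} ∧
        ∃ g, t ∈ 𝒯 g}) := by
  classical
  -- injectivity of the polynomial representation
  have Pinj : ∀ f f' : ℕ →₀ S,
      (f.sum fun i s => ι s * x ^ i) = (f'.sum fun i s => ι s * x ^ i) → f = f' := by
    intro f f' h
    obtain ⟨f₀, -, hu⟩ := hfree (f.sum fun i s => ι s * x ^ i)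
    exact (hu f rfl).trans (hu f' h).symm
  -- monomial membership
  have Tmono : ∀ (i : ℕ) (s : S) (h : H) g, s ∈ 𝒜 h →
      (QuotientGroup.mk (h, Multiplicative.ofAdd (i : ℤ)) :
        (H × Multiplicative ℤ) ⧸ Subgroup.zpowers ((c, Multiplicative.ofAdd (-(n + 1 : ℤ))) : H × Multiplicative ℤ)) = g → ι s * x ^ i ∈ 𝒯 g := by
    intro i s h g hs hg
    rw [h𝒯]
    refine ⟨Finsupp.single i s, ?_, ?_⟩
    · exact (Finsupp.sum_single_index (h := fun j t => ι t * x ^ j) (by simp)).symm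
    intro j hj
    rw [Finsupp.mem_support_iff] at hj
    have hji : j = i := by
      by_contra hne
      exact hj (Finsupp.single_eq_of_ne' (Ne.symm hne))
    subst hji
    exact ⟨h, by rwa [Finsupp.single_eq_same], hg⟩
  -- skew commutation for powers
  have hskewpow : ∀ (i : ℕ) (a : S), x ^ i * ι a = ι ((⇑τ)^[i] a) * x ^ i := by
    intro i
    induction i with
    | zero => simp
    | succ k ih =>
      intro a
      calc x ^ (k + 1) * ι a = x ^ k * (x * ι a) := by rw [pow_succ, mul_assoc]
        _ = x ^ k * (ι (τ a) * x) := by rw [hskew]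
        _ = (x ^ k * ι (τ a)) * x := by rw [mul_assoc]
        _ = (ι ((⇑τ)^[k] (τ a)) * x ^ k) * x := by rw [ih]
        _ = ι ((⇑τ)^[k + 1] a) * x ^ (k + 1) := by
            rw [Function.iterate_succ_apply, mul_assoc, ← pow_succ]
  have hτi : ∀ (i : ℕ) (h : H) (a : S), a ∈ 𝒜 h → (⇑τ)^[i] a ∈ 𝒜 h := by
    intro i
    induction i with
    | zero => intro h a ha; simpa using ha
    | succ k ih =>
      intro h a ha
      rw [Function.iterate_succ_apply]
      exact ih h (τ a) (hτgr h a ha)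
  -- multiplicativity of the grading
  have Tmul : ∀ g g' (u v : T), u ∈ 𝒯 g → v ∈ 𝒯 g' → u * v ∈ 𝒯 (g * g') := by
    intro g g' u v hu hv
    rw [h𝒯] at hu hv
    obtain ⟨f, rfl, hf⟩ := hu
    obtain ⟨f', rfl, hf'⟩ := hv
    rw [Finsupp.sum, Finsupp.sum, Finset.sum_mul_sum]
    apply AddSubgroup.sum_mem
    intro i hi
    apply AddSubgroup.sum_mem
    intro j hj
    obtain ⟨h, hsh, hgh⟩ := hf i hi
    obtain ⟨h', hsh', hgh'⟩ := hf' j hj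
    have hrw : (ι (f i) * x ^ i) * (ι (f' j) * x ^ j)
        = ι (f i * (⇑τ)^[i] (f' j)) * x ^ (i + j) := by
      calc (ι (f i) * x ^ i) * (ι (f' j) * x ^ j)
          = ι (f i) * (x ^ i * ι (f' j)) * x ^ j := by
            rw [mul_assoc, mul_assoc, mul_assoc]
        _ = ι (f i) * (ι ((⇑τ)^[i] (f' j)) * x ^ i) * x ^ j := by rw [hskewpow]
        _ = ι (f i * (⇑τ)^[i] (f' j)) * x ^ (i + j) := by
            rw [map_mul, pow_add, mul_assoc, mul_assoc, mul_assoc]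
    rw [hrw]
    refine Tmono (i + j) _ (h * h') _ (hmul hsh (hτi i _ _ hsh')) ?_
    rw [← hgh, ← hgh', ← QuotientGroup.mk_mul]
    congr 1
  -- ι ω is homogeneous of degree (QuotientGroup.mk (c, Multiplicative.ofAdd (0 : ℤ)))
  have hιω : ι ω ∈ 𝒯 (QuotientGroup.mk (c, Multiplicative.ofAdd (0 : ℤ))) := by
    have := Tmono 0 ω c (QuotientGroup.mk (c, Multiplicative.ofAdd (0 : ℤ))) hω (by norm_num)
    simpa using this
  -- left regularity of ι ω in T
  have hregT : ∀ u : T, ι ω * u = 0 → u = 0 := by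
    intro u hu
    obtain ⟨f, rfl, -⟩ := hfree u
    have h1 : ι ω * f.sum (fun i s => ι s * x ^ i)
        = (f.mapRange (fun s => ω * s) (mul_zero ω)).sum (fun i s => ι s * x ^ i) := by
      rw [Finsupp.sum_mapRange_index (by simp), Finsupp.mul_sum]
      exact Finsupp.sum_congr fun i _ => by rw [map_mul, mul_assoc]
    rw [h1] at hu
    have h2 : f.mapRange (fun s => ω * s) (mul_zero ω) = 0 :=
      Pinj _ 0 (by simpa [Finsupp.sum_zero_index] using hu)
    have h3 : f = 0 := by
      ext i
      have h4 := DFunLike.congr_fun h2 i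
      simp only [Finsupp.mapRange_apply, Finsupp.coe_zero, Pi.zero_apply] at h4
      simpa using hreg_right (f i) h4
    simp [h3]
  -- 1 ∈ 𝒯 1
  have hone : (1 : T) ∈ 𝒯 1 := by
    have hsum := DirectSum.sum_support_decompose 𝒯 (1 : T)
    have hall : ∀ g ∈ (DirectSum.decompose 𝒯 (1 : T)).support, g = 1 := by
      intro g hg
      by_contra hne
      have hWsum : ι ω = ∑ g' ∈ (DirectSum.decompose 𝒯 (1 : T)).support,
          ι ω * (DirectSum.decompose 𝒯 (1 : T) g' : T) := by
        rw [← Finset.mul_sum, hsum, mul_one]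
      have e1 : ((DirectSum.decompose 𝒯 (ι ω)) ((QuotientGroup.mk (c, Multiplicative.ofAdd (0 : ℤ))) * g) : T) = 0 := by
        refine DirectSum.decompose_of_mem_ne 𝒯 hιω ?_
        intro h
        exact hne (mul_left_cancel (a := (QuotientGroup.mk (c, Multiplicative.ofAdd (0 : ℤ)))) (by rw [← h, mul_one])).symm
      have e2 : ((DirectSum.decompose 𝒯 (ι ω)) ((QuotientGroup.mk (c, Multiplicative.ofAdd (0 : ℤ))) * g) : T)
          = ι ω * (DirectSum.decompose 𝒯 (1 : T) g : T) := by
        calc ((DirectSum.decompose 𝒯 (ι ω)) ((QuotientGroup.mk (c, Multiplicative.ofAdd (0 : ℤ))) * g) : T)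
            = ∑ g' ∈ (DirectSum.decompose 𝒯 (1 : T)).support,
              ((DirectSum.decompose 𝒯
                (ι ω * (DirectSum.decompose 𝒯 (1 : T) g' : T))) ((QuotientGroup.mk (c, Multiplicative.ofAdd (0 : ℤ))) * g) : T) := by
              conv_lhs => rw [hWsum]
              rw [DirectSum.decompose_sum, DFinsupp.finset_sum_apply,
                AddSubmonoidClass.coe_finset_sum]
          _ = ι ω * (DirectSum.decompose 𝒯 (1 : T) g : T) := by
              rw [Finset.sum_eq_single_of_mem g hg]
              · exact DirectSum.decompose_of_mem_same 𝒯
                  (Tmul (QuotientGroup.mk (c, Multiplicative.ofAdd (0 : ℤ))) g _ _ hιω (SetLike.coe_mem _))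
              · intro g' _ hgg'
                refine DirectSum.decompose_of_mem_ne 𝒯
                  (Tmul (QuotientGroup.mk (c, Multiplicative.ofAdd (0 : ℤ))) g' _ _ hιω (SetLike.coe_mem _)) ?_
                exact fun h => hgg' (mul_left_cancel h)
      have hz : (DirectSum.decompose 𝒯 (1 : T) g : T) = 0 := hregT _ (by rw [← e2, e1])
      exact (DFinsupp.mem_support_iff.mp hg) (by exact_mod_cast Subtype.ext hz)
    rw [← hsum]
    refine AddSubgroup.sum_mem _ fun g hg => ?_
    rw [← hall g hg]
    exact SetLike.coe_mem _
  -- 1 ∈ 𝒜 1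
  have h1A : (1 : S) ∈ 𝒜 1 := by
    by_cases h10 : (1 : S) = 0
    · rw [h10]; exact zero_mem _
    obtain ⟨f, hf, hsupp⟩ := (h𝒯 1 1).mp hone
    have hfs : f = Finsupp.single 0 1 := by
      refine Pinj f (Finsupp.single 0 1) ?_
      rw [← hf, Finsupp.sum_single_index (by simp)]
      simp
    subst hfs
    have h0 : (0 : ℕ) ∈ (Finsupp.single (0 : ℕ) (1 : S)).support := by
      rw [Finsupp.mem_support_iff, Finsupp.single_eq_same]
      exact h10
    obtain ⟨h, hmem, hcl⟩ := hsupp 0 h0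
    have hh1 : h = 1 := by
      rw [QuotientGroup.eq_one_iff, Subgroup.mem_zpowers_iff] at hcl
      obtain ⟨k, hk⟩ := hcl
      have hsnd := congrArg Prod.snd hk
      have hfst := congrArg Prod.fst hk
      simp only [Prod.pow_snd, Prod.pow_fst] at hsnd hfst
      have hk0 : k = 0 := by
        have h5 := congrArg Multiplicative.toAdd hsnd
        simp only [toAdd_zpow, toAdd_ofAdd, smul_eq_mul] at h5
        rcases mul_eq_zero.mp h5 with h | h
        · exact h
        · exfalso; omega
      rw [hk0] at hfst
      simpa using hfst.symm
    rw [hh1] at hmem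
    simpa using hmem
  -- x^(n+1) is homogeneous of degree (QuotientGroup.mk (c, Multiplicative.ofAdd (0 : ℤ)))
  have hxn : x ^ (n + 1) ∈ 𝒯 (QuotientGroup.mk (c, Multiplicative.ofAdd (0 : ℤ))) := by
    have hcl : (QuotientGroup.mk ((1 : H), Multiplicative.ofAdd ((n + 1 : ℕ) : ℤ)) :
        (H × Multiplicative ℤ) ⧸ Subgroup.zpowers ((c, Multiplicative.ofAdd (-(n + 1 : ℤ))) : H × Multiplicative ℤ)) = (QuotientGroup.mk (c, Multiplicative.ofAdd (0 : ℤ))) := by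
      rw [QuotientGroup.eq]
      rw [Subgroup.mem_zpowers_iff]
      refine ⟨1, ?_⟩
      rw [zpow_one, Prod.inv_mk, Prod.mk_mul_mk, Prod.mk.injEq]
      refine ⟨by simp, ?_⟩
      rw [← ofAdd_neg, ← ofAdd_add]
      exact congrArg Multiplicative.ofAdd (by push_cast; ring)
    have := Tmono (n + 1) 1 1 (QuotientGroup.mk (c, Multiplicative.ofAdd (0 : ℤ))) h1A hcl
    simpa using this
  have ht0 : x ^ (n + 1) + ι ω ∈ 𝒯 (QuotientGroup.mk (c, Multiplicative.ofAdd (0 : ℤ))) := AddSubgroup.add_mem _ hxn hιω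
  refine ⟨ht0, ?_⟩
  apply le_antisymm
  · rw [AddSubgroup.closure_le]
    rintro t ⟨a, b, rfl⟩
    have hab : a * (x ^ (n + 1) + ι ω) * b
        = ∑ g ∈ (DirectSum.decompose 𝒯 a).support, ∑ g' ∈ (DirectSum.decompose 𝒯 b).support,
          (DirectSum.decompose 𝒯 a g : T) * (x ^ (n + 1) + ι ω)
            * (DirectSum.decompose 𝒯 b g' : T) := by
      conv_lhs => rw [← DirectSum.sum_support_decompose 𝒯 a,
        ← DirectSum.sum_support_decompose 𝒯 b]
      rw [Finset.sum_mul, Finset.sum_mul]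
      exact Finset.sum_congr rfl fun g _ => Finset.mul_sum _ _ _
    rw [hab]
    refine AddSubgroup.sum_mem _ fun g _ => AddSubgroup.sum_mem _ fun g' _ => ?_
    refine AddSubgroup.subset_closure ⟨AddSubgroup.subset_closure ⟨_, _, rfl⟩, ?_⟩
    exact ⟨g * (QuotientGroup.mk (c, Multiplicative.ofAdd (0 : ℤ))) * g', Tmul _ _ _ _ (Tmul _ _ _ _ (SetLike.coe_mem _) ht0) (SetLike.coe_mem _)⟩
  · rw [AddSubgroup.closure_le]
    exact fun t ht => ht.1
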